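/- Let N ≥ 1 and let λ¹, …, λ^N : ℝ^N → ℝ be continuous and nowhere zero, and let v, w : ℝ^N → ℝ be continuously differentiable functions of R = (R¹, …, R^N) satisfying ∂w/∂R^i = −λ^i ∂v/∂R^i for each i. Define μ^i := −λ^i − v − w/λ^i. Let R : ℝ³ → ℝ^N be a continuously differentiable function of (t,x,y) satisfying R^i_t = λ^i(R) R^i_x and R^i_y = μ^i(R) R^i_x for each i. Then the functions V := v ∘ R and W := w ∘ R solve the system (max): V_t + W_x = 0 and W_t + W_y + V W_x − W V_x = 0. -/

import Mathlib

/-- Partial derivative of `f : ℝⁿ → ℝ` in the `i`-th coordinate direction. -/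
noncomputable def pd {n : ℕ} (i : Fin n) (f : (Fin n → ℝ) → ℝ) (x : Fin n → ℝ) : ℝ :=
  fderiv ℝ f x (Pi.single i 1)

/-- Chain rule for `pd`: the partial derivative of `f ∘ R` in direction `k`. -/
lemma chainPd {N : ℕ} (f : (Fin N → ℝ) → ℝ) (hf : ContDiff ℝ 1 f)
    (R : (Fin 3 → ℝ) → (Fin N → ℝ)) (hR : ContDiff ℝ 1 R) (k : Fin 3) (p : Fin 3 → ℝ) :
    pd k (fun q => f (R q)) p = ∑ i, pd i f (R p) * pd k (fun q => R q i) p := by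
  have hfd : DifferentiableAt ℝ f (R p) := (hf.differentiable one_ne_zero).differentiableAt
  have hRd : DifferentiableAt ℝ R p := (hR.differentiable one_ne_zero).differentiableAt
  have hcomp : fderiv ℝ (fun q => f (R q)) p = (fderiv ℝ f (R p)).comp (fderiv ℝ R p) :=
    fderiv_comp p hfd hRd
  have hpi : fderiv ℝ R p = ContinuousLinearMap.pi (fun i => fderiv ℝ (fun q => R q i) p) :=
    fderiv_pi (fun i => (differentiableAt_pi.mp hRd) i)
  have hproj : ∀ i, pd k (fun q => R q i) p = fderiv ℝ R p (Pi.single k 1) i := by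
    intro i
    simp [pd, hpi]
  set u : Fin N → ℝ := fderiv ℝ R p (Pi.single k 1) with hu
  have husum : u = ∑ i, u i • (Pi.single i 1 : Fin N → ℝ) := by
    funext j
    simp [Finset.sum_apply, Pi.single_apply]
  calc pd k (fun q => f (R q)) p = fderiv ℝ f (R p) u := by
        rw [pd, hcomp]; rfl
    _ = ∑ i, u i * fderiv ℝ f (R p) (Pi.single i 1) := by
        conv_lhs => rw [husum]
        rw [map_sum]
        simp [smul_eq_mul]
    _ = ∑ i, pd i f (R p) * pd k (fun q => R q i) p := by
        refine Finset.sum_congr rfl fun i _ => ?_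
        rw [hproj i, pd]; ring

/-- Coordinates on ℝ³ are `(t,x,y)` = indices `(0,1,2)`.
Hydrodynamic reductions: if `∂w/∂Rⁱ = −λⁱ ∂v/∂Rⁱ`, `μⁱ = −λⁱ − v − w/λⁱ`, and the phases
satisfy `Rⁱ_t = λⁱ(R) Rⁱ_x`, `Rⁱ_y = μⁱ(R) Rⁱ_x`, then `V = v∘R`, `W = w∘R` solve (max). -/
theorem stmt11 (N : ℕ) (hN : 1 ≤ N)
    (lam : Fin N → (Fin N → ℝ) → ℝ)
    (hlamc : ∀ i, Continuous (lam i)) (hlam0 : ∀ i R, lam i R ≠ 0)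
    (v w : (Fin N → ℝ) → ℝ) (hv : ContDiff ℝ 1 v) (hw : ContDiff ℝ 1 w)
    (hvw : ∀ (i : Fin N) (R : Fin N → ℝ), pd i w R = -lam i R * pd i v R)
    (mu : Fin N → (Fin N → ℝ) → ℝ)
    (hmu : ∀ (i : Fin N) (R : Fin N → ℝ), mu i R = -lam i R - v R - w R / lam i R)
    (R : (Fin 3 → ℝ) → (Fin N → ℝ)) (hR : ContDiff ℝ 1 R)
    (hRt : ∀ (i : Fin N) (p : Fin 3 → ℝ),
        pd 0 (fun q => R q i) p = lam i (R p) * pd 1 (fun q => R q i) p)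
    (hRy : ∀ (i : Fin N) (p : Fin 3 → ℝ),
        pd 2 (fun q => R q i) p = mu i (R p) * pd 1 (fun q => R q i) p) :
    (∀ p, pd 0 (fun q => v (R q)) p + pd 1 (fun q => w (R q)) p = 0) ∧
    (∀ p, pd 0 (fun q => w (R q)) p + pd 2 (fun q => w (R q)) p
        + v (R p) * pd 1 (fun q => w (R q)) p - w (R p) * pd 1 (fun q => v (R q)) p = 0) := by
  constructor
  · intro p
    rw [chainPd v hv R hR 0 p, chainPd w hw R hR 1 p, ← Finset.sum_add_distrib]
    refine Finset.sum_eq_zero fun i _ => ?_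
    rw [hvw i (R p), hRt i p]; ring
  · intro p
    rw [chainPd w hw R hR 0 p, chainPd w hw R hR 2 p, chainPd w hw R hR 1 p,
        chainPd v hv R hR 1 p, Finset.mul_sum, Finset.mul_sum,
        ← Finset.sum_add_distrib, ← Finset.sum_add_distrib, ← Finset.sum_sub_distrib]
    refine Finset.sum_eq_zero fun i _ => ?_
    rw [hvw i (R p), hRt i p, hRy i p, hmu i (R p)]
    field_simp [hlam0 i (R p)]
    ring
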